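/- arXiv:1107.1675 — 2 statements merged into one kernel-verified Lean document; each statement's English description precedes it below -/
import Mathlib

section
/- If a null vector field K spans a parallel ray, i.e. ∇_a K^b = f_a K^b for a one-form f, then the curvature tensor satisfies R_{ab}{}^c{}_d K^d = (∇_{[a} f_{b]}) K^c; in particular R_{abcd} X^c K^d = 0 for every X orthogonal to K. -/
/- A coordinate-chart framework for pseudo-Riemannian geometry on ℝⁿ:
metric, Christoffel symbols, covariant derivatives, curvature, Ricci,
Schouten, Weyl, Cotton and Bach tensors, and the standard tractor
connection, all written in index notation. -/

noncomputable section

open scoped BigOperators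

/-- Points of the chart ℝⁿ. -/
abbrev Pt (n : ℕ) := Fin n → ℝ

/-- Partial derivative of a scalar function in the coordinate direction `a`. -/
def pd {n : ℕ} (a : Fin n) (f : Pt n → ℝ) (x : Pt n) : ℝ :=
  fderiv ℝ f x (Pi.single a 1)

/-- A smooth vector field. -/
def SmoothVF {n : ℕ} (K : Pt n → Pt n) : Prop := ∀ b, ContDiff ℝ (⊤ : ℕ∞) (fun x => K x b)

/-- A smooth one-form. -/
def SmoothForm {n : ℕ} (f : Pt n → Fin n → ℝ) : Prop := ∀ b, ContDiff ℝ (⊤ : ℕ∞) (fun x => f x b)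

/-- A pseudo-Riemannian metric (of arbitrary signature) in a global
coordinate chart on ℝⁿ, given by its components `g x a b`, together with the
components `ginv` of its pointwise inverse. -/
structure MetricG (n : ℕ) where
  g : Pt n → Fin n → Fin n → ℝ
  ginv : Pt n → Fin n → Fin n → ℝ
  symm : ∀ x a b, g x a b = g x b a
  smooth : ∀ a b, ContDiff ℝ (⊤ : ℕ∞) (fun x => g x a b)
  inv_mul : ∀ x a c, (∑ b, ginv x a b * g x b c) = if a = c then (1:ℝ) else 0

namespace MetricG

variable {n : ℕ} (G : MetricG n)

/-- The inner product of two tangent vectors at `x`. -/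
def ip (x : Pt n) (X Y : Pt n) : ℝ := ∑ a, ∑ b, G.g x a b * X a * Y b

/-- Christoffel symbols Γ^c_{ab} of the Levi-Civita connection. -/
def Γ (c a b : Fin n) (x : Pt n) : ℝ :=
  (1/2) * ∑ d, G.ginv x c d *
    (pd a (fun y => G.g y d b) x + pd b (fun y => G.g y d a) x - pd d (fun y => G.g y a b) x)

/-- Covariant derivative (∇_a X)^b of a vector field. -/
def covVec (X : Pt n → Pt n) (a b : Fin n) (x : Pt n) : ℝ :=
  pd a (fun y => X y b) x + ∑ c, G.Γ b a c x * X x c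

/-- Covariant derivative ∇_a ω_b of a one-form. -/
def cov1 (ω : Pt n → Fin n → ℝ) (a b : Fin n) (x : Pt n) : ℝ :=
  pd a (fun y => ω y b) x - ∑ e, G.Γ e a b x * ω x e

/-- Covariant derivative ∇_a T_{bc} of a (0,2)-tensor field. -/
def cov2 (T : Pt n → Fin n → Fin n → ℝ) (a b c : Fin n) (x : Pt n) : ℝ :=
  pd a (fun y => T y b c) x - ∑ e, G.Γ e a b x * T x e c - ∑ e, G.Γ e a c x * T x b e

/-- Covariant derivative ∇_a T_{bcd} of a (0,3)-tensor field. -/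
def cov3 (T : Pt n → Fin n → Fin n → Fin n → ℝ) (a b c d : Fin n) (x : Pt n) : ℝ :=
  pd a (fun y => T y b c d) x - ∑ e, G.Γ e a b x * T x e c d
    - ∑ e, G.Γ e a c x * T x b e d - ∑ e, G.Γ e a d x * T x b c e

/-- Curvature tensor R_{ab}{}^c{}_d, with the convention
`(∇_a∇_b − ∇_b∇_a)X^c = R_{ab}{}^c{}_d X^d`. -/
def Riem (a b c d : Fin n) (x : Pt n) : ℝ :=
  pd a (fun y => G.Γ c b d y) x - pd b (fun y => G.Γ c a d y) x
    + ∑ e, (G.Γ c a e x * G.Γ e b d x - G.Γ c b e x * G.Γ e a d x)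

/-- (4,0)-curvature tensor R_{abcd} = g_{ce} R_{ab}{}^e{}_d. -/
def Riem4 (a b c d : Fin n) (x : Pt n) : ℝ :=
  ∑ e, G.g x c e * G.Riem a b e d x

/-- Ricci tensor R_{bd} = R_{cb}{}^c{}_d. -/
def Ricci (b d : Fin n) (x : Pt n) : ℝ := ∑ c, G.Riem c b c d x

/-- Scalar curvature R = g^{ab} R_{ab}. -/
def Scal (x : Pt n) : ℝ := ∑ a, ∑ b, G.ginv x a b * G.Ricci a b x

/-- Schouten tensor P_{ab} = (1/(n−2)) (R_{ab} − R/(2(n−1)) g_{ab}). -/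
def Schouten (a b : Fin n) (x : Pt n) : ℝ :=
  (1 / ((n : ℝ) - 2)) * (G.Ricci a b x - G.Scal x / (2 * ((n : ℝ) - 1)) * G.g x a b)

/-- Weyl tensor C_{abcd} = R_{abcd} − 2(g_{c[a}P_{b]d} + g_{d[b}P_{a]c}). -/
def Weyl (a b c d : Fin n) (x : Pt n) : ℝ :=
  G.Riem4 a b c d x -
    (G.g x c a * G.Schouten b d x - G.g x c b * G.Schouten a d x
      + G.g x d b * G.Schouten a c x - G.g x d a * G.Schouten b c x)

/-- Cotton tensor A_{abc} = ∇_b P_{ca} − ∇_c P_{ba} (= 2∇_{[b}P_{c]a}). -/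
def Cotton (a b c : Fin n) (x : Pt n) : ℝ :=
  G.cov2 (fun y i j => G.Schouten i j y) b c a x - G.cov2 (fun y i j => G.Schouten i j y) c b a x

/-- Bach tensor B_{ab} = ∇^c A_{acb} + P^{dc} C_{dacb}. -/
def Bach (a b : Fin n) (x : Pt n) : ℝ :=
  (∑ c, ∑ e, G.ginv x c e * G.cov3 (fun y i j k => G.Cotton i j k y) e a c b x)
    + ∑ d, ∑ c, (∑ i, ∑ j, G.ginv x d i * G.ginv x c j * G.Schouten i j x) * G.Weyl d a c b x

/-- `K` is a null vector field. -/
def IsNull (K : Pt n → Pt n) : Prop := ∀ x, G.ip x (K x) (K x) = 0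

/-- Pure radiation condition: Ric(X,·) = 0 for every vector X orthogonal to K. -/
def PureRadiation (K : Pt n → Pt n) : Prop :=
  ∀ x (X : Pt n), G.ip x (K x) X = 0 → ∀ b, (∑ a, G.Ricci a b x * X a) = 0

/-- Parallel rays condition: ∇_a K^b = f_a K^b. -/
def ParallelRays (K : Pt n → Pt n) (f : Pt n → Fin n → ℝ) : Prop :=
  ∀ x a b, G.covVec K a b x = f x a * K x b

/-- first (ℝ-) component of the tractor derivative of the tractor (ρ, X, σ):
∇_a ρ − P_{ab} X^b. -/
def trD0 (ρ : Pt n → ℝ) (X : Pt n → Pt n) (a : Fin n) (x : Pt n) : ℝ :=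
  pd a ρ x - ∑ b, G.Schouten a b x * X x b

/-- middle (TM-) component of the tractor derivative of the tractor (ρ, X, σ):
∇_a X^b + ρ δ_a{}^b + σ P_a{}^b. -/
def trD1 (ρ : Pt n → ℝ) (X : Pt n → Pt n) (σ : Pt n → ℝ) (a b : Fin n) (x : Pt n) : ℝ :=
  G.covVec X a b x + ρ x * (if a = b then (1:ℝ) else 0)
    + σ x * ∑ e, G.ginv x b e * G.Schouten a e x

/-- last (ℝ-) component of the tractor derivative of the tractor (ρ, X, σ):
∇_a σ − g_{ab} X^b. -/
def trD2 (X : Pt n → Pt n) (σ : Pt n → ℝ) (a : Fin n) (x : Pt n) : ℝ :=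
  pd a σ x - ∑ b, G.g x a b * X x b

end MetricG

section Stmt4Aux

variable {n : ℕ}

lemma pd_sub' {u v : Pt n → ℝ} {x : Pt n} (hu : DifferentiableAt ℝ u x)
    (hv : DifferentiableAt ℝ v x) (a : Fin n) :
    pd a (fun y => u y - v y) x = pd a u x - pd a v x := by
  simp only [pd, fderiv_fun_sub hu hv, ContinuousLinearMap.sub_apply]

lemma pd_mul' {u v : Pt n → ℝ} {x : Pt n} (hu : DifferentiableAt ℝ u x)
    (hv : DifferentiableAt ℝ v x) (a : Fin n) :
    pd a (fun y => u y * v y) x = pd a u x * v x + u x * pd a v x := by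
  simp only [pd, fderiv_fun_mul hu hv, ContinuousLinearMap.add_apply,
    ContinuousLinearMap.smul_apply, smul_eq_mul]
  ring

lemma pd_sum' {ι : Type*} (s : Finset ι) {F : ι → Pt n → ℝ} {x : Pt n}
    (h : ∀ i ∈ s, DifferentiableAt ℝ (F i) x) (a : Fin n) :
    pd a (fun y => ∑ i ∈ s, F i y) x = ∑ i ∈ s, pd a (F i) x := by
  simp only [pd, fderiv_fun_sum h, ContinuousLinearMap.sum_apply]

lemma pd_smooth {f : Pt n → ℝ} (hf : ContDiff ℝ (⊤ : ℕ∞) f) (a : Fin n) :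
    ContDiff ℝ (⊤ : ℕ∞) (fun x => pd a f x) := by
  have h1 : ContDiff ℝ (⊤ : ℕ∞) (fderiv ℝ f) := hf.fderiv_right (by simp)
  exact h1.clm_apply contDiff_const

lemma pd_comm' {f : Pt n → ℝ} (hf : ContDiff ℝ (⊤ : ℕ∞) f) (a b : Fin n) (x : Pt n) :
    pd a (fun y => pd b f y) x = pd b (fun y => pd a f y) x := by
  have hd : DifferentiableAt ℝ (fderiv ℝ f) x :=
    ((hf.fderiv_right (m := 1) (WithTop.coe_le_coe.mpr le_top)).differentiable one_ne_zero) x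
  have h1 : ∀ v w : Pt n, fderiv ℝ (fun y => fderiv ℝ f y w) x v
      = fderiv ℝ (fderiv ℝ f) x v w := by
    intro v w
    rw [fderiv_clm_apply hd (differentiableAt_const w)]
    simp
  have hs : IsSymmSndFDerivAt ℝ f x := hf.contDiffAt.isSymmSndFDerivAt (by rw [minSmoothness_of_isRCLikeNormedField]; exact WithTop.coe_le_coe.mpr le_top)
  simp only [pd]
  rw [h1, h1]
  exact hs _ _

lemma contDiff_det' {m : ℕ} {M : Pt n → Matrix (Fin m) (Fin m) ℝ}
    (h : ∀ i j, ContDiff ℝ (⊤ : ℕ∞) fun x => M x i j) :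
    ContDiff ℝ (⊤ : ℕ∞) fun x => (M x).det := by
  simp only [Matrix.det_apply']
  exact ContDiff.sum fun σ _ => contDiff_const.mul (contDiff_prod fun i _ => h (σ i) i)

lemma Gamma_symm (G : MetricG n) (c a b : Fin n) (x : Pt n) :
    G.Γ c a b x = G.Γ c b a x := by
  unfold MetricG.Γ
  congr 1
  apply Finset.sum_congr rfl
  intro d _
  have h1 : (fun y => G.g y a b) = fun y => G.g y b a := funext fun y => G.symm y a b
  rw [h1]
  ring

end Stmt4Aux

/-- If a null vector field K spans a parallel ray, ∇_a K^b = f_a K^b, then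
R_{ab}{}^c{}_d K^d = (∇_{[a}f_{b]}) K^c (antisymmetrisation ∇_{[a}f_{b]} = ∇_a f_b − ∇_b f_a);
in particular R_{abcd} X^c K^d = 0 for every X orthogonal to K. -/
theorem stmt_4 {n : ℕ} (hn : 3 ≤ n) (G : MetricG n) (K : Pt n → Pt n) (f : Pt n → Fin n → ℝ)
    (hKs : SmoothVF K) (hfs : SmoothForm f) (hK0 : ∀ x, K x ≠ 0) (hnull : G.IsNull K)
    (hray : G.ParallelRays K f) :
    (∀ x a b c, (∑ d, G.Riem a b c d x * K x d)
        = (G.cov1 f a b x - G.cov1 f b a x) * K x c) ∧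
      ∀ x (X : Pt n), G.ip x (K x) X = 0 → ∀ a b,
        (∑ c, ∑ d, G.Riem4 a b c d x * X c * K x d) = 0 := by
  classical
  -- smoothness of the inverse metric
  have hMsmooth : ∀ i j : Fin n, ContDiff ℝ (⊤ : ℕ∞) fun x => (Matrix.of fun i j => G.g x i j : Matrix (Fin n) (Fin n) ℝ) i j := by
    intro i j; simpa using G.smooth i j
  have hdet : ContDiff ℝ (⊤ : ℕ∞) fun x => (Matrix.of fun i j => G.g x i j : Matrix (Fin n) (Fin n) ℝ).det :=
    contDiff_det' hMsmooth
  have hleft : ∀ x, (Matrix.of fun i j => G.ginv x i j) * (Matrix.of fun i j => G.g x i j) = (1 : Matrix (Fin n) (Fin n) ℝ) := by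
    intro x
    ext a c
    simpa [Matrix.mul_apply, Matrix.one_apply] using G.inv_mul x a c
  have hdetne : ∀ x, (Matrix.of fun i j => G.g x i j : Matrix (Fin n) (Fin n) ℝ).det ≠ 0 := by
    intro x hx
    have h1 := congrArg Matrix.det (hleft x)
    rw [Matrix.det_mul, Matrix.det_one, hx, mul_zero] at h1
    exact zero_ne_one h1
  have hginv_eq : ∀ x i j, G.ginv x i j
      = ((Matrix.of fun i j => G.g x i j : Matrix (Fin n) (Fin n) ℝ).det)⁻¹
        * (Matrix.of fun i j => G.g x i j : Matrix (Fin n) (Fin n) ℝ).adjugate i j := by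
    intro x i j
    have h1 : (Matrix.of fun i j => G.g x i j : Matrix (Fin n) (Fin n) ℝ)⁻¹
        = Matrix.of fun i j => G.ginv x i j := Matrix.inv_eq_left_inv (hleft x)
    have h2 : G.ginv x i j = (Matrix.of fun i j => G.g x i j : Matrix (Fin n) (Fin n) ℝ)⁻¹ i j := by
      rw [h1]; rfl
    rw [Matrix.inv_def] at h2
    simpa [Matrix.smul_apply, smul_eq_mul, Ring.inverse_eq_inv] using h2
  have hginv : ∀ i j, ContDiff ℝ (⊤ : ℕ∞) fun x => G.ginv x i j := by
    intro i j
    have hfe : (fun x => G.ginv x i j)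
        = fun x => ((Matrix.of fun i j => G.g x i j : Matrix (Fin n) (Fin n) ℝ).det)⁻¹
            * (Matrix.of fun i j => G.g x i j : Matrix (Fin n) (Fin n) ℝ).adjugate i j :=
      funext fun x => hginv_eq x i j
    rw [hfe]
    refine (hdet.inv hdetne).mul ?_
    have hadj : (fun x => (Matrix.of fun i j => G.g x i j : Matrix (Fin n) (Fin n) ℝ).adjugate i j)
        = fun x => ((Matrix.of fun i j => G.g x i j : Matrix (Fin n) (Fin n) ℝ).updateRow j (Pi.single i 1)).det :=
      funext fun x => Matrix.adjugate_apply _ i j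
    rw [hadj]
    refine contDiff_det' ?_
    intro i' j'
    by_cases h : i' = j
    · simp only [Matrix.updateRow_apply, h, if_pos rfl]
      exact contDiff_const
    · simpa [Matrix.updateRow_apply, h] using hMsmooth i' j'
  have hΓs : ∀ c a b, ContDiff ℝ (⊤ : ℕ∞) fun x => G.Γ c a b x := by
    intro c a b
    unfold MetricG.Γ
    refine contDiff_const.mul (ContDiff.sum fun d _ => (hginv c d).mul ?_)
    exact ((pd_smooth (G.smooth d b) a).add (pd_smooth (G.smooth d a) b)).sub
      (pd_smooth (G.smooth a b) d)
  have hΓd : ∀ c a b, Differentiable ℝ fun x => G.Γ c a b x :=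
    fun c a b => (hΓs c a b).differentiable (by simp)
  have hKd : ∀ b, Differentiable ℝ fun x => K x b := fun b => (hKs b).differentiable (by simp)
  have hfd : ∀ b, Differentiable ℝ fun x => f x b := fun b => (hfs b).differentiable (by simp)
  have DK : ∀ a b x, pd a (fun y => K y b) x = f x a * K x b - ∑ e, G.Γ b a e x * K x e := by
    intro a b x
    have h := hray x a b
    unfold MetricG.covVec at h
    linarith [h]
  -- the main curvature identity, in terms of pd of f
  have main : ∀ x a b c, (∑ d, G.Riem a b c d x * K x d)
      = (pd a (fun y => f y b) x - pd b (fun y => f y a) x) * K x c := by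
    intro x a b c
    have H : ∀ a b : Fin n, pd a (fun y => pd b (fun z => K z c) y) x
        = pd a (fun y => f y b) x * K x c
          + f x b * (f x a * K x c - ∑ e, G.Γ c a e x * K x e)
          - ((∑ e, pd a (fun y => G.Γ c b e y) x * K x e)
            + (f x a * (∑ e, G.Γ c b e x * K x e)
              - ∑ e, ∑ d, G.Γ c b e x * (G.Γ e a d x * K x d))) := by
      intro a b
      have e1 : (fun y => pd b (fun z => K z c) y)
          = fun y => f y b * K y c - ∑ e, G.Γ c b e y * K y e :=
        funext fun y => DK b c y
      rw [e1]
      rw [pd_sub' (u := fun y => f y b * K y c)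
        (v := fun y => ∑ e, G.Γ c b e y * K y e)
        (((hfd b) x).mul ((hKd c) x))
        (DifferentiableAt.fun_sum fun e _ => ((hΓd c b e) x).mul ((hKd e) x)) a]
      rw [pd_mul' ((hfd b) x) ((hKd c) x) a, DK a c x]
      rw [pd_sum' Finset.univ (F := fun e y => G.Γ c b e y * K y e)
        (fun e _ => ((hΓd c b e) x).mul ((hKd e) x)) a]
      have e2 : ∑ e, pd a (fun y => G.Γ c b e y * K y e) x
          = (∑ e, pd a (fun y => G.Γ c b e y) x * K x e)
            + (f x a * (∑ e, G.Γ c b e x * K x e)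
              - ∑ e, ∑ d, G.Γ c b e x * (G.Γ e a d x * K x d)) := by
        have e3 : ∀ e ∈ Finset.univ, pd a (fun y => G.Γ c b e y * K y e) x
            = pd a (fun y => G.Γ c b e y) x * K x e
              + (f x a * (G.Γ c b e x * K x e)
                - ∑ d, G.Γ c b e x * (G.Γ e a d x * K x d)) := by
          intro e _
          rw [pd_mul' ((hΓd c b e) x) ((hKd e) x) a, DK a e x, mul_sub, Finset.mul_sum]
          ring
        rw [Finset.sum_congr rfl e3, Finset.sum_add_distrib, Finset.sum_sub_distrib,
          ← Finset.mul_sum]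
      rw [e2]
    have hswap : pd a (fun y => pd b (fun z => K z c) y) x
        = pd b (fun y => pd a (fun z => K z c) y) x := pd_comm' (hKs c) a b x
    have goal_lhs : ∑ d, G.Riem a b c d x * K x d
        = (∑ e, pd a (fun y => G.Γ c b e y) x * K x e)
          - (∑ e, pd b (fun y => G.Γ c a e y) x * K x e)
          + ((∑ e, ∑ d, G.Γ c a e x * (G.Γ e b d x * K x d))
            - (∑ e, ∑ d, G.Γ c b e x * (G.Γ e a d x * K x d))) := by
      have e4 : ∀ d ∈ Finset.univ, G.Riem a b c d x * K x d
          = pd a (fun y => G.Γ c b d y) x * K x d - pd b (fun y => G.Γ c a d y) x * K x d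
            + ∑ e, (G.Γ c a e x * (G.Γ e b d x * K x d)
              - G.Γ c b e x * (G.Γ e a d x * K x d)) := by
        intro d _
        unfold MetricG.Riem
        rw [add_mul, sub_mul, Finset.sum_mul]
        congr 1
        apply Finset.sum_congr rfl
        intro e _
        ring
      rw [Finset.sum_congr rfl e4, Finset.sum_add_distrib, Finset.sum_sub_distrib]
      congr 1
      rw [Finset.sum_comm]
      simp [Finset.sum_sub_distrib]
    rw [goal_lhs]
    linear_combination (H a b) - (H b a) - hswap
  have cov1_eq : ∀ x a b, G.cov1 f a b x - G.cov1 f b a x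
      = pd a (fun y => f y b) x - pd b (fun y => f y a) x := by
    intro x a b
    unfold MetricG.cov1
    have h1 : ∀ e ∈ Finset.univ, G.Γ e a b x * f x e = G.Γ e b a x * f x e :=
      fun e _ => by rw [Gamma_symm]
    rw [Finset.sum_congr rfl h1]
    ring
  constructor
  · intro x a b c
    rw [main x a b c, cov1_eq x a b]
  · intro x X hX a b
    have step1 : ∑ c, ∑ d, G.Riem4 a b c d x * X c * K x d
        = (pd a (fun y => f y b) x - pd b (fun y => f y a) x)
          * ∑ c, ∑ e, G.g x c e * X c * K x e := by
      rw [Finset.mul_sum]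
      apply Finset.sum_congr rfl
      intro c _
      rw [Finset.mul_sum]
      calc ∑ d, G.Riem4 a b c d x * X c * K x d
          = ∑ e, (G.g x c e * X c) * (∑ d, G.Riem a b e d x * K x d) := by
            simp only [MetricG.Riem4, Finset.sum_mul]
            rw [Finset.sum_comm]
            apply Finset.sum_congr rfl
            intro e _
            rw [Finset.mul_sum]
            apply Finset.sum_congr rfl
            intro d _
            ring
        _ = ∑ e, (pd a (fun y => f y b) x - pd b (fun y => f y a) x)
              * (G.g x c e * X c * K x e) := by
            apply Finset.sum_congr rfl
            intro e _
            rw [main x a b e]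
            ring
    rw [step1]
    have hip : ∑ c, ∑ e, G.g x c e * X c * K x e = G.ip x (K x) X := by
      unfold MetricG.ip
      rw [Finset.sum_comm]
      apply Finset.sum_congr rfl
      intro e _
      apply Finset.sum_congr rfl
      intro c _
      rw [G.symm x c e]
      ring
    rw [hip, hX, mul_zero]
end
end

section
/- (Cotton condition for aligned pure radiation) If g is a pure radiation metric with parallel rays spanned by K, then the Cotton tensor A_{abc} = 2∇_{[b}P_{c]a} satisfies A_{abc} X^a = 0 for every X orthogonal to K. -/
/- A coordinate-chart framework for pseudo-Riemannian geometry on ℝⁿ: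
metric, Christoffel symbols, covariant derivatives, curvature, Ricci,
Schouten, Weyl, Cotton and Bach tensors, and the standard tractor
connection, all written in index notation. -/

noncomputable section

open scoped BigOperators

/-! ### Auxiliary development for stmt_7 -/

namespace Stmt7Aux

open Filter

variable {n : ℕ}

/-- smoothness shorthand -/
abbrev Sm (f : Pt n → ℝ) : Prop := ContDiff ℝ (⊤ : ℕ∞) f

lemma Sm.dAt {f : Pt n → ℝ} (hf : Sm f) (x : Pt n) : DifferentiableAt ℝ f x :=
  (hf.differentiable (by simp)).differentiableAt

lemma pd_congr {a : Fin n} {f g : Pt n → ℝ} {x : Pt n} (h : f =ᶠ[nhds x] g) :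
    pd a f x = pd a g x := by
  unfold pd; rw [h.fderiv_eq]

lemma pd_mul {f g : Pt n → ℝ} {x : Pt n} (hf : DifferentiableAt ℝ f x)
    (hg : DifferentiableAt ℝ g x) (a : Fin n) :
    pd a (fun y => f y * g y) x = pd a f x * g x + f x * pd a g x := by
  unfold pd; rw [fderiv_fun_mul hf hg]
  simp [ContinuousLinearMap.add_apply, ContinuousLinearMap.smul_apply]; ring

lemma pd_const (c : ℝ) (a : Fin n) (x : Pt n) : pd a (fun _ => c) x = 0 := by
  unfold pd; rw [fderiv_fun_const]; rfl

lemma pd_const_mul {f : Pt n → ℝ} {x : Pt n} (hf : DifferentiableAt ℝ f x) (c : ℝ) (a : Fin n) :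
    pd a (fun y => c * f y) x = c * pd a f x := by
  rw [pd_mul (differentiableAt_const c) hf, pd_const]; ring

lemma pd_sum {ι : Type*} {s : Finset ι} {F : ι → Pt n → ℝ} {x : Pt n}
    (hF : ∀ i ∈ s, DifferentiableAt ℝ (F i) x) (a : Fin n) :
    pd a (fun y => ∑ i ∈ s, F i y) x = ∑ i ∈ s, pd a (F i) x := by
  unfold pd; rw [fderiv_fun_sum hF]; simp

lemma Sm.pd {f : Pt n → ℝ} (hf : Sm f) (a : Fin n) : Sm (fun x => pd a f x) := by
  have h1 : ContDiff ℝ (⊤ : ℕ∞) (fderiv ℝ f) := hf.fderiv_right (m := (⊤ : ℕ∞)) (by simp)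
  have h2 := (ContinuousLinearMap.apply ℝ ℝ (Pi.single a 1 : Pt n)).contDiff (n := ((⊤ : ℕ∞) : WithTop ℕ∞))
  exact h2.comp h1

lemma Sm.sum {ι : Type*} {s : Finset ι} {F : ι → Pt n → ℝ} (hF : ∀ i ∈ s, Sm (F i)) :
    Sm (fun x => ∑ i ∈ s, F i x) := ContDiff.sum hF

/-- Clairaut / symmetry of second partial derivatives for smooth functions. -/
lemma pd_pd_symm {f : Pt n → ℝ} (hf : Sm f) (b d : Fin n) (x : Pt n) :
    pd b (fun y => pd d f y) x = pd d (fun y => pd b f y) x := by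
  have hsym : IsSymmSndFDerivAt ℝ f x :=
    (hf.contDiffAt).isSymmSndFDerivAt (by rw [minSmoothness_of_isRCLikeNormedField]; exact WithTop.coe_le_coe.2 (le_top : (2 : ℕ∞) ≤ ⊤))
  have hdf : DifferentiableAt ℝ (fderiv ℝ f) x :=
    ((hf.fderiv_right (m := (⊤ : ℕ∞)) (by simp)).differentiable (by simp)).differentiableAt
  have key : ∀ v w : Pt n,
      fderiv ℝ (fun y => fderiv ℝ f y w) x v = fderiv ℝ (fderiv ℝ f) x v w := by
    intro v w
    have h := ((ContinuousLinearMap.apply ℝ ℝ w).hasFDerivAt.comp x hdf.hasFDerivAt).fderiv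
    have : (fun y => fderiv ℝ f y w) = (ContinuousLinearMap.apply ℝ ℝ w) ∘ (fderiv ℝ f) := rfl
    rw [this, h]; rfl
  show pd b (fun y => fderiv ℝ f y (Pi.single d 1)) x = pd d (fun y => fderiv ℝ f y (Pi.single b 1)) x
  unfold pd
  rw [key (Pi.single b 1) (Pi.single d 1), key (Pi.single d 1) (Pi.single b 1), hsym.eq]

end Stmt7Aux

namespace Stmt7Aux
section Metric
open Matrix
variable {n : ℕ} (G : MetricG n)

attribute [local instance] Matrix.linftyOpNormedRing Matrix.linftyOpNormedAlgebra

/-- the metric as a matrix-valued function -/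
def gm (x : Pt n) : Matrix (Fin n) (Fin n) ℝ := fun a b => G.g x a b

/-- the inverse metric as a matrix-valued function -/
def gim (x : Pt n) : Matrix (Fin n) (Fin n) ℝ := fun a b => G.ginv x a b

lemma gim_mul_gm (x : Pt n) : gim G x * gm G x = 1 := by
  ext a c
  simpa [Matrix.mul_apply, gim, gm, Matrix.one_apply] using G.inv_mul x a c

lemma gm_mul_gim (x : Pt n) : gm G x * gim G x = 1 :=
  mul_eq_one_comm.1 (gim_mul_gm G x)

lemma mul_inv_entry (x : Pt n) (a c : Fin n) :
    (∑ b, G.g x a b * G.ginv x b c) = if a = c then (1:ℝ) else 0 := by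
  have h := congrFun (congrFun (gm_mul_gim G x) a) c
  simpa [Matrix.mul_apply, gim, gm, Matrix.one_apply] using h

lemma gim_eq_inv (x : Pt n) : gim G x = (gm G x)⁻¹ :=
  (Matrix.inv_eq_left_inv (gim_mul_gm G x)).symm

lemma ginv_symm (x : Pt n) (a b : Fin n) : G.ginv x a b = G.ginv x b a := by
  have hgt : (gm G x)ᵀ = gm G x := by
    ext i j; simp [Matrix.transpose_apply, gm, G.symm x j i]
  have h : (gim G x)ᵀ = gim G x := by
    rw [gim_eq_inv, Matrix.transpose_nonsing_inv, hgt]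
  have := congrFun (congrFun h b) a
  simpa [Matrix.transpose_apply, gim] using this

lemma gm_smooth : ContDiff ℝ (⊤ : ℕ∞) (gm G) := by
  let e : (Fin n → Fin n → ℝ) ≃L[ℝ] Matrix (Fin n) (Fin n) ℝ :=
    (Matrix.ofLinearEquiv ℝ).toContinuousLinearEquiv
  have h1 : ContDiff ℝ (⊤ : ℕ∞) (fun x => (fun a b => G.g x a b : Fin n → Fin n → ℝ)) :=
    contDiff_pi.2 fun a => contDiff_pi.2 fun b => G.smooth a b
  have h2 := e.toContinuousLinearMap.contDiff.comp h1
  have he : gm G = ⇑e.toContinuousLinearMap ∘ (fun x => (fun a b => G.g x a b : Fin n → Fin n → ℝ)) := by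
    funext x; rfl
  rw [he]; exact h2

lemma ginv_smooth (a b : Fin n) : Sm (fun x => G.ginv x a b) := by
  have hinv : ∀ x : Pt n, ContDiffAt ℝ (⊤ : ℕ∞) (Ring.inverse : Matrix (Fin n) (Fin n) ℝ → _) (gm G x) :=
    fun x => contDiffAt_ringInverse ℝ
      (⟨gm G x, gim G x, gm_mul_gim G x, gim_mul_gm G x⟩ : (Matrix (Fin n) (Fin n) ℝ)ˣ)
  let l : Matrix (Fin n) (Fin n) ℝ →ₗ[ℝ] ℝ :=
    { toFun := fun M => M a b, map_add' := fun _ _ => rfl, map_smul' := fun _ _ => rfl }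
  have hl := (LinearMap.toContinuousLinearMap l).contDiff (n := ((⊤ : ℕ∞) : WithTop ℕ∞))
  have hfun : (fun x => G.ginv x a b)
      = (fun M : Matrix (Fin n) (Fin n) ℝ => M a b) ∘ Ring.inverse ∘ gm G := by
    funext x
    have : gim G x = Ring.inverse (gm G x) := by
      rw [gim_eq_inv, Matrix.nonsing_inv_eq_ringInverse]
    simp only [Function.comp_apply, ← this]; rfl
  rw [hfun]
  refine contDiff_iff_contDiffAt.2 fun x => (hl.contDiffAt).comp x (((hinv x).comp x (gm_smooth G).contDiffAt))

lemma g_smooth (a b : Fin n) : Sm (fun x => G.g x a b) := G.smooth a b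

end Metric
end Stmt7Aux

namespace Stmt7Aux
section Gamma
open Matrix
variable {n : ℕ} (G : MetricG n)

lemma trace2 (P Q : Matrix (Fin n) (Fin n) ℝ) :
    ∑ c, ∑ e, P c e * Q e c = ∑ c, ∑ e, Q c e * P e c := by
  have h1 : ∑ c, ∑ e, P c e * Q e c = Matrix.trace (P * Q) := by
    simp [Matrix.trace, Matrix.mul_apply, Matrix.diag]
  have h2 : ∑ c, ∑ e, Q c e * P e c = Matrix.trace (Q * P) := by
    simp [Matrix.trace, Matrix.mul_apply, Matrix.diag]
  rw [h1, h2, Matrix.trace_mul_comm]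

lemma Γ_smooth (c a b : Fin n) : Sm (fun x => G.Γ c a b x) := by
  unfold MetricG.Γ
  apply ContDiff.mul contDiff_const
  apply Sm.sum
  intro d _
  exact (ginv_smooth G c d).mul
    ((((g_smooth G d b).pd a).add ((g_smooth G d a).pd b)).sub ((g_smooth G a b).pd d))

lemma Γ_symm (c a b : Fin n) (x : Pt n) : G.Γ c a b x = G.Γ c b a x := by
  unfold MetricG.Γ
  congr 1
  apply Finset.sum_congr rfl
  intro d _
  have h : (fun y => G.g y a b) = (fun y => G.g y b a) := funext fun y => G.symm y a b
  rw [h]; ring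

lemma g_mul_Γ (x : Pt n) (a b e : Fin n) :
    ∑ c, G.g x a c * G.Γ c b e x
      = (1/2) * (pd b (fun y => G.g y a e) x + pd e (fun y => G.g y a b) x
          - pd a (fun y => G.g y b e) x) := by
  unfold MetricG.Γ
  have step1 : ∑ c, G.g x a c * ((1/2) * ∑ d, G.ginv x c d *
        (pd b (fun y => G.g y d e) x + pd e (fun y => G.g y d b) x - pd d (fun y => G.g y b e) x))
      = ∑ d, ∑ c, G.g x a c * G.ginv x c d * ((1/2) *
        (pd b (fun y => G.g y d e) x + pd e (fun y => G.g y d b) x - pd d (fun y => G.g y b e) x)) := by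
    rw [Finset.sum_comm]
    apply Finset.sum_congr rfl; intro c _
    simp only [Finset.mul_sum]
    apply Finset.sum_congr rfl; intro d _; ring
  rw [step1]
  have step2 : ∀ d, (∑ c, G.g x a c * G.ginv x c d) = if a = d then (1:ℝ) else 0 :=
    fun d => mul_inv_entry G x a d
  have step3 : ∀ d, ∑ c, G.g x a c * G.ginv x c d * ((1/2) *
        (pd b (fun y => G.g y d e) x + pd e (fun y => G.g y d b) x - pd d (fun y => G.g y b e) x))
      = (if a = d then (1:ℝ) else 0) * ((1/2) *
        (pd b (fun y => G.g y d e) x + pd e (fun y => G.g y d b) x - pd d (fun y => G.g y b e) x)) := by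
    intro d; rw [← Finset.sum_mul, step2]
  rw [Finset.sum_congr rfl (fun d _ => step3 d)]
  simp

lemma compat (x : Pt n) (b a e : Fin n) :
    pd b (fun y => G.g y a e) x
      = (∑ c, G.g x a c * G.Γ c b e x) + ∑ c, G.g x e c * G.Γ c b a x := by
  rw [g_mul_Γ, g_mul_Γ]
  have h : ∀ i j : Fin n, (fun y => G.g y i j) = (fun y => G.g y j i) :=
    fun i j => funext fun y => G.symm y i j
  rw [h e a, h e b, h b a]  -- normalize: g_ea→g_ae? careful
  ring

end Gamma
end Stmt7Aux

namespace Stmt7Aux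
section Ricci
open Matrix
variable {n : ℕ} (G : MetricG n)

lemma pd_ginv (x : Pt n) (b c q : Fin n) :
    pd b (fun y => G.ginv y c q) x
      = - ∑ a, ∑ e, G.ginv x c e * pd b (fun y => G.g y e a) x * G.ginv x a q := by
  have hA : ∀ a : Fin n,
      (∑ e, pd b (fun y => G.ginv y c e) x * G.g x e a)
        + (∑ e, G.ginv x c e * pd b (fun y => G.g y e a) x) = 0 := by
    intro a
    have h0 : (fun y => ∑ e, G.ginv y c e * G.g y e a) = (fun _ => if c = a then (1:ℝ) else 0) :=
      funext fun y => G.inv_mul y c a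
    have h1 : pd b (fun y => ∑ e, G.ginv y c e * G.g y e a) x = 0 := by
      rw [h0, pd_const]
    have h2 : pd b (fun y => ∑ e, G.ginv y c e * G.g y e a) x
        = ∑ e, (pd b (fun y => G.ginv y c e) x * G.g x e a
            + G.ginv x c e * pd b (fun y => G.g y e a) x) := by
      rw [pd_sum (fun e _ => ((ginv_smooth G c e).dAt x).fun_mul ((g_smooth G e a).dAt x))]
      exact Finset.sum_congr rfl fun e _ =>
        pd_mul ((ginv_smooth G c e).dAt x) ((g_smooth G e a).dAt x) b
    rw [h2, Finset.sum_add_distrib] at h1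
    linarith [h1]
  have hA' : ∀ a : Fin n, (∑ e, pd b (fun y => G.ginv y c e) x * G.g x e a)
      = - ∑ e, G.ginv x c e * pd b (fun y => G.g y e a) x := by
    intro a; linarith [hA a]
  have key : pd b (fun y => G.ginv y c q) x
      = ∑ a, (∑ e, pd b (fun y => G.ginv y c e) x * G.g x e a) * G.ginv x a q := by
    calc pd b (fun y => G.ginv y c q) x
        = ∑ e, pd b (fun y => G.ginv y c e) x * (if e = q then (1:ℝ) else 0) := by simp
      _ = ∑ e, pd b (fun y => G.ginv y c e) x * (∑ a, G.g x e a * G.ginv x a q) := by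
          apply Finset.sum_congr rfl; intro e _; rw [mul_inv_entry G x e q]
      _ = ∑ e, ∑ a, pd b (fun y => G.ginv y c e) x * G.g x e a * G.ginv x a q := by
          apply Finset.sum_congr rfl; intro e _; rw [Finset.mul_sum]
          apply Finset.sum_congr rfl; intro a _; ring
      _ = ∑ a, ∑ e, pd b (fun y => G.ginv y c e) x * G.g x e a * G.ginv x a q :=
          Finset.sum_comm
      _ = ∑ a, (∑ e, pd b (fun y => G.ginv y c e) x * G.g x e a) * G.ginv x a q := by
          apply Finset.sum_congr rfl; intro a _; rw [Finset.sum_mul]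
  calc pd b (fun y => G.ginv y c q) x
      = ∑ a, (∑ e, pd b (fun y => G.ginv y c e) x * G.g x e a) * G.ginv x a q := key
    _ = ∑ a, (- ∑ e, G.ginv x c e * pd b (fun y => G.g y e a) x) * G.ginv x a q := by
        apply Finset.sum_congr rfl; intro a _; rw [hA' a]
    _ = - ∑ a, ∑ e, G.ginv x c e * pd b (fun y => G.g y e a) x * G.ginv x a q := by
        rw [← Finset.sum_neg_distrib]
        apply Finset.sum_congr rfl; intro a _
        rw [neg_mul, Finset.sum_mul]

end Ricci
end Stmt7Aux

namespace Stmt7Aux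
section RicciSymm
open Matrix
variable {n : ℕ} (G : MetricG n)

lemma trace4 (A X Y : Matrix (Fin n) (Fin n) ℝ) :
    ∑ c, ∑ e, (∑ a, ∑ p, A c p * X p a * A a e) * Y e c
      = ∑ c, ∑ e, (∑ a, ∑ p, A c p * Y p a * A a e) * X e c := by
  have expand : ∀ U V : Matrix (Fin n) (Fin n) ℝ,
      Matrix.trace (A * U * A * V) = ∑ c, ∑ e, (∑ a, ∑ p, A c p * U p a * A a e) * V e c := by
    intro U V
    simp only [Matrix.trace, Matrix.diag, Matrix.mul_apply]
    apply Finset.sum_congr rfl; intro c _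
    apply Finset.sum_congr rfl; intro e _
    congr 1
    apply Finset.sum_congr rfl; intro a _
    rw [Finset.sum_mul]
  have h1 : A * X * A * Y = (A * X) * (A * Y) := by rw [mul_assoc (A * X) A Y]
  have h2 : A * Y * A * X = (A * Y) * (A * X) := by rw [mul_assoc (A * Y) A X]
  rw [← expand X Y, ← expand Y X, h1, h2, Matrix.trace_mul_comm]

lemma trT_eq (d : Fin n) :
    (fun y => ∑ c, G.Γ c c d y)
      = fun y => (1/2) * ∑ c, ∑ e, G.ginv y c e * pd d (fun z => G.g z e c) y := by
  funext y
  unfold MetricG.Γ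
  have h13 : ∑ c, ∑ e, G.ginv y c e * pd c (fun z => G.g z e d) y
      = ∑ c, ∑ e, G.ginv y c e * pd e (fun z => G.g z c d) y := by
    rw [Finset.sum_comm]
    apply Finset.sum_congr rfl; intro c _
    apply Finset.sum_congr rfl; intro e _
    rw [ginv_symm G y e c]
  have e1 : ∀ c : Fin n, ((1:ℝ)/2) * (∑ e, G.ginv y c e *
        (pd c (fun z => G.g z e d) y + pd d (fun z => G.g z e c) y - pd e (fun z => G.g z c d) y))
      = (1/2) * ((∑ e, G.ginv y c e * pd c (fun z => G.g z e d) y)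
          + (∑ e, G.ginv y c e * pd d (fun z => G.g z e c) y)
          - ∑ e, G.ginv y c e * pd e (fun z => G.g z c d) y) := by
    intro c
    congr 1
    rw [← Finset.sum_add_distrib, ← Finset.sum_sub_distrib]
    apply Finset.sum_congr rfl; intro e _
    ring
  rw [Finset.sum_congr rfl fun c _ => e1 c]
  have e2 : ∀ (F H J : Fin n → ℝ),
      ∑ c, ((1:ℝ)/2) * (F c + H c - J c) = (1/2) * ((∑ c, F c) + (∑ c, H c) - ∑ c, J c) := by
    intro F H J
    simp [mul_add, mul_sub, Finset.sum_add_distrib, Finset.sum_sub_distrib, Finset.mul_sum]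
  rw [e2]
  rw [h13]
  ring

lemma ricci_eq (b d : Fin n) (x : Pt n) :
    G.Ricci b d x = (∑ c, pd c (fun y => G.Γ c b d y) x)
      - pd b (fun y => ∑ c, G.Γ c c d y) x
      + ∑ c, ∑ e, (G.Γ c c e x * G.Γ e b d x - G.Γ c b e x * G.Γ e c d x) := by
  unfold MetricG.Ricci MetricG.Riem
  rw [pd_sum (fun c _ => (Γ_smooth G c c d).dAt x)]
  rw [← Finset.sum_sub_distrib, ← Finset.sum_add_distrib]

lemma ricci_symm (b d : Fin n) (x : Pt n) : G.Ricci b d x = G.Ricci d b x := by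
  rw [ricci_eq G b d x, ricci_eq G d b x]
  have part1 : (∑ c, pd c (fun y => G.Γ c b d y) x) = ∑ c, pd c (fun y => G.Γ c d b y) x := by
    apply Finset.sum_congr rfl; intro c _
    rw [show (fun y => G.Γ c b d y) = (fun y => G.Γ c d b y) from funext fun y => Γ_symm G c b d y]
  have part3a : ∑ c, ∑ e, G.Γ c c e x * G.Γ e b d x = ∑ c, ∑ e, G.Γ c c e x * G.Γ e d b x := by
    apply Finset.sum_congr rfl; intro c _
    apply Finset.sum_congr rfl; intro e _
    rw [Γ_symm G e b d x]
  have part3b : ∑ c, ∑ e, G.Γ c b e x * G.Γ e c d x = ∑ c, ∑ e, G.Γ c d e x * G.Γ e c b x := by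
    have ht := trace2 (Matrix.of fun c e => G.Γ c b e x) (Matrix.of fun c e => G.Γ c d e x)
    simp only [Matrix.of_apply] at ht
    calc ∑ c, ∑ e, G.Γ c b e x * G.Γ e c d x
        = ∑ c, ∑ e, G.Γ c b e x * G.Γ e d c x := by
          apply Finset.sum_congr rfl; intro c _; apply Finset.sum_congr rfl; intro e _
          rw [Γ_symm G e c d x]
      _ = ∑ c, ∑ e, G.Γ c d e x * G.Γ e b c x := ht
      _ = ∑ c, ∑ e, G.Γ c d e x * G.Γ e c b x := by
          apply Finset.sum_congr rfl; intro c _; apply Finset.sum_congr rfl; intro e _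
          rw [Γ_symm G e b c x]
  have part2 : pd b (fun y => ∑ c, G.Γ c c d y) x = pd d (fun y => ∑ c, G.Γ c c b y) x := by
    rw [trT_eq G d, trT_eq G b]
    have hsm : ∀ (u : Fin n) (c e : Fin n),
        DifferentiableAt ℝ (fun y => G.ginv y c e * pd u (fun z => G.g z e c) y) x :=
      fun u c e => ((ginv_smooth G c e).dAt x).mul (((g_smooth G e c).pd u).dAt x)
    have key : ∀ u v : Fin n,
        pd u (fun y => (1/2) * ∑ c, ∑ e, G.ginv y c e * pd v (fun z => G.g z e c) y) x
          = (1/2) * ((∑ c, ∑ e, pd u (fun y => G.ginv y c e) x * pd v (fun z => G.g z e c) x)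
              + ∑ c, ∑ e, G.ginv x c e * pd u (fun y => pd v (fun z => G.g z e c) y) x) := by
      intro u v
      rw [pd_const_mul (f := fun y => ∑ c, ∑ e, G.ginv y c e * pd v (fun z => G.g z e c) y)
        (DifferentiableAt.fun_sum fun c _ => DifferentiableAt.fun_sum fun e _ => hsm v c e) (1/2) u]
      congr 1
      rw [pd_sum (fun c _ => DifferentiableAt.fun_sum fun e _ => hsm v c e) u]
      rw [← Finset.sum_add_distrib]
      apply Finset.sum_congr rfl; intro c _
      rw [pd_sum (fun e _ => hsm v c e) u, ← Finset.sum_add_distrib]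
      apply Finset.sum_congr rfl; intro e _
      exact pd_mul ((ginv_smooth G c e).dAt x) (((g_smooth G e c).pd v).dAt x) u
    rw [key b d, key d b]
    have hC : ∑ c, ∑ e, G.ginv x c e * pd b (fun y => pd d (fun z => G.g z e c) y) x
        = ∑ c, ∑ e, G.ginv x c e * pd d (fun y => pd b (fun z => G.g z e c) y) x := by
      apply Finset.sum_congr rfl; intro c _; apply Finset.sum_congr rfl; intro e _
      rw [pd_pd_symm (g_smooth G e c) b d x]
    have hD : ∑ c, ∑ e, pd b (fun y => G.ginv y c e) x * pd d (fun z => G.g z e c) x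
        = ∑ c, ∑ e, pd d (fun y => G.ginv y c e) x * pd b (fun z => G.g z e c) x := by
      have ht := trace4 (gim G x) (Matrix.of fun p a => pd b (fun z => G.g z p a) x)
        (Matrix.of fun p a => pd d (fun z => G.g z p a) x)
      simp only [Matrix.of_apply] at ht
      calc ∑ c, ∑ e, pd b (fun y => G.ginv y c e) x * pd d (fun z => G.g z e c) x
          = ∑ c, ∑ e, (- ∑ a, ∑ p, G.ginv x c p * pd b (fun z => G.g z p a) x * G.ginv x a e)
              * pd d (fun z => G.g z e c) x := by
            apply Finset.sum_congr rfl; intro c _; apply Finset.sum_congr rfl; intro e _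
            rw [pd_ginv G x b c e]
        _ = - ∑ c, ∑ e, (∑ a, ∑ p, G.ginv x c p * pd b (fun z => G.g z p a) x * G.ginv x a e)
              * pd d (fun z => G.g z e c) x := by
            rw [← Finset.sum_neg_distrib]
            apply Finset.sum_congr rfl; intro c _
            rw [← Finset.sum_neg_distrib]
            apply Finset.sum_congr rfl; intro e _
            rw [neg_mul]
        _ = - ∑ c, ∑ e, (∑ a, ∑ p, G.ginv x c p * pd d (fun z => G.g z p a) x * G.ginv x a e)
              * pd b (fun z => G.g z e c) x := by
            rw [show (gim G x : Matrix (Fin n) (Fin n) ℝ) = fun a b => G.ginv x a b from rfl] at ht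
            rw [ht]
        _ = ∑ c, ∑ e, (- ∑ a, ∑ p, G.ginv x c p * pd d (fun z => G.g z p a) x * G.ginv x a e)
              * pd b (fun z => G.g z e c) x := by
            rw [← Finset.sum_neg_distrib]
            apply Finset.sum_congr rfl; intro c _
            rw [← Finset.sum_neg_distrib]
            apply Finset.sum_congr rfl; intro e _
            rw [neg_mul]
        _ = ∑ c, ∑ e, pd d (fun y => G.ginv y c e) x * pd b (fun z => G.g z e c) x := by
            apply Finset.sum_congr rfl; intro c _; apply Finset.sum_congr rfl; intro e _
            rw [pd_ginv G x d c e]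
    rw [hC, hD]
  have split : ∀ u v : Fin n,
      ∑ c, ∑ e, (G.Γ c c e x * G.Γ e u v x - G.Γ c u e x * G.Γ e c v x)
        = (∑ c, ∑ e, G.Γ c c e x * G.Γ e u v x) - ∑ c, ∑ e, G.Γ c u e x * G.Γ e c v x := by
    intro u v
    rw [← Finset.sum_sub_distrib]
    apply Finset.sum_congr rfl; intro c _
    rw [← Finset.sum_sub_distrib]
  rw [part1, part2, split b d, split d b, part3a, part3b]

end RicciSymm
end Stmt7Aux

namespace Stmt7Aux
section KField
variable {n : ℕ} (G : MetricG n) (K : Pt n → Pt n) (f : Pt n → Fin n → ℝ)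

lemma riem_smooth (a b c d : Fin n) : Sm (fun x => G.Riem a b c d x) := by
  unfold MetricG.Riem
  refine (((Γ_smooth G c b d).pd a).sub ((Γ_smooth G c a d).pd b)).add (Sm.sum fun e _ => ?_)
  exact ((Γ_smooth G c a e).mul (Γ_smooth G e b d)).sub ((Γ_smooth G c b e).mul (Γ_smooth G e a d))

lemma ricci_smooth (b d : Fin n) : Sm (fun x => G.Ricci b d x) :=
  Sm.sum fun c _ => riem_smooth G c b c d

lemma scal_smooth : Sm (fun x => G.Scal x) :=
  Sm.sum fun a _ => Sm.sum fun b _ => (ginv_smooth G a b).mul (ricci_smooth G a b)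

lemma schouten_smooth (a b : Fin n) : Sm (fun x => G.Schouten a b x) := by
  unfold MetricG.Schouten
  exact contDiff_const.mul
    ((ricci_smooth G a b).sub (((scal_smooth G).div_const _).mul (g_smooth G a b)))

/-- the lowered vector field K♭ -/
def Lv (x : Pt n) (a : Fin n) : ℝ := ∑ b, G.g x a b * K x b

lemma Lv_smooth (hKs : SmoothVF K) (a : Fin n) : Sm (fun x => Lv G K x a) :=
  Sm.sum fun b _ => (g_smooth G a b).mul (hKs b)

lemma ip_eq (y : Pt n) (v : Pt n) : G.ip y (K y) v = ∑ a, Lv G K y a * v a := by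
  unfold MetricG.ip Lv
  rw [Finset.sum_comm]
  apply Finset.sum_congr rfl; intro a _
  rw [Finset.sum_mul]
  apply Finset.sum_congr rfl; intro b _
  rw [G.symm y b a]

lemma ginv_Lv (y : Pt n) (b : Fin n) : ∑ a, G.ginv y b a * Lv G K y a = K y b := by
  unfold Lv
  calc ∑ a, G.ginv y b a * ∑ c, G.g y a c * K y c
      = ∑ a, ∑ c, G.ginv y b a * G.g y a c * K y c := by
        apply Finset.sum_congr rfl; intro a _
        rw [Finset.mul_sum]
        apply Finset.sum_congr rfl; intro c _; ring
    _ = ∑ c, ∑ a, G.ginv y b a * G.g y a c * K y c := Finset.sum_comm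
    _ = ∑ c, (∑ a, G.ginv y b a * G.g y a c) * K y c := by
        apply Finset.sum_congr rfl; intro c _; rw [Finset.sum_mul]
    _ = ∑ c, (if b = c then (1:ℝ) else 0) * K y c := by
        apply Finset.sum_congr rfl; intro c _; rw [G.inv_mul y b c]
    _ = K y b := by simp

lemma Lv_ne (hK0 : ∀ x, K x ≠ 0) (y : Pt n) : ∃ i, Lv G K y i ≠ 0 := by
  by_contra hcon
  push_neg at hcon
  apply hK0 y
  funext b
  have h := ginv_Lv G K y b
  simp only [hcon, mul_zero, Finset.sum_const_zero] at h
  simpa using h.symm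

lemma rad (hpr : G.PureRadiation K) (y : Pt n) (b : Fin n) (v : Pt n)
    (hv : (∑ a, Lv G K y a * v a) = 0) : (∑ a, G.Ricci a b y * v a) = 0 := by
  refine hpr y v ?_ b
  rw [ip_eq]; exact hv

lemma ricci_rank_one (hpr : G.PureRadiation K) (y : Pt n) (i : Fin n)
    (hi : Lv G K y i ≠ 0) (a b : Fin n) :
    G.Ricci a b y = (G.Ricci i i y / (Lv G K y i)^2) * Lv G K y a * Lv G K y b := by
  have key : ∀ p q : Fin n, G.Ricci p q y * Lv G K y i = G.Ricci i q y * Lv G K y p := by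
    intro p q
    by_cases hpi : p = i
    · subst hpi; ring
    set v : Pt n := fun j => (if j = p then Lv G K y i else 0)
        - (if j = i then Lv G K y p else 0) with hvdef
    have hv : (∑ j, Lv G K y j * v j) = 0 := by
      simp only [hvdef, mul_sub, Finset.sum_sub_distrib, mul_ite, mul_zero]
      rw [Finset.sum_ite_eq', Finset.sum_ite_eq']
      simp [mul_comm]
    have h0 := rad G K hpr y q v hv
    simp only [hvdef, mul_sub, Finset.sum_sub_distrib, mul_ite, mul_zero] at h0
    rw [Finset.sum_ite_eq', Finset.sum_ite_eq'] at h0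
    simp at h0
    linarith
  have key2 : G.Ricci i b y * Lv G K y i = G.Ricci i i y * Lv G K y b := by
    calc G.Ricci i b y * Lv G K y i = G.Ricci b i y * Lv G K y i := by rw [ricci_symm G i b y]
      _ = G.Ricci i i y * Lv G K y b := key b i
  have h1 := key a b
  have hmain : G.Ricci a b y * (Lv G K y i)^2 = G.Ricci i i y * Lv G K y a * Lv G K y b := by
    calc G.Ricci a b y * (Lv G K y i)^2
        = (G.Ricci a b y * Lv G K y i) * Lv G K y i := by ring
      _ = (G.Ricci i b y * Lv G K y a) * Lv G K y i := by rw [h1]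
      _ = (G.Ricci i b y * Lv G K y i) * Lv G K y a := by ring
      _ = (G.Ricci i i y * Lv G K y b) * Lv G K y a := by rw [key2]
      _ = G.Ricci i i y * Lv G K y a * Lv G K y b := by ring
  have h2 : (Lv G K y i)^2 ≠ 0 := pow_ne_zero 2 hi
  field_simp
  linear_combination hmain

lemma scal_zero (hpr : G.PureRadiation K) (hnull : G.IsNull K) (hK0 : ∀ x, K x ≠ 0)
    (y : Pt n) : G.Scal y = 0 := by
  obtain ⟨i, hi⟩ := Lv_ne G K hK0 y
  unfold MetricG.Scal
  set ψ := G.Ricci i i y / (Lv G K y i)^2 with hψ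
  have hKK : (∑ b, Lv G K y b * K y b) = 0 := by
    rw [← ip_eq]; exact hnull y
  calc ∑ a, ∑ b, G.ginv y a b * G.Ricci a b y
      = ∑ b, ∑ a, G.ginv y b a * Lv G K y a * (ψ * Lv G K y b) := by
        rw [Finset.sum_comm]
        apply Finset.sum_congr rfl; intro b _
        apply Finset.sum_congr rfl; intro a _
        rw [ricci_rank_one G K hpr y i hi a b, ginv_symm G y a b]
        ring
    _ = ∑ b, (∑ a, G.ginv y b a * Lv G K y a) * (ψ * Lv G K y b) := by
        apply Finset.sum_congr rfl; intro b _; rw [Finset.sum_mul]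
    _ = ∑ b, ψ * (Lv G K y b * K y b) := by
        apply Finset.sum_congr rfl; intro b _; rw [ginv_Lv G K y b]; ring
    _ = ψ * ∑ b, Lv G K y b * K y b := by rw [Finset.mul_sum]
    _ = 0 := by rw [hKK, mul_zero]

lemma schouten_eq (hpr : G.PureRadiation K) (hnull : G.IsNull K) (hK0 : ∀ x, K x ≠ 0)
    (y : Pt n) (i : Fin n) (hi : Lv G K y i ≠ 0) (a b : Fin n) :
    G.Schouten a b y
      = ((1/((n:ℝ)-2)) * (G.Ricci i i y / (Lv G K y i)^2)) * Lv G K y a * Lv G K y b := by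
  unfold MetricG.Schouten
  rw [scal_zero G K hpr hnull hK0 y, ricci_rank_one G K hpr y i hi a b]
  ring

lemma pd_Lv (hKs : SmoothVF K) (hray : G.ParallelRays K f) (x : Pt n) (b a : Fin n) :
    pd b (fun y => Lv G K y a) x
      = f x b * Lv G K x a + ∑ e, G.Γ e b a x * Lv G K x e := by
  have hdK : ∀ c, DifferentiableAt ℝ (fun y => K y c) x := fun c => Sm.dAt (hKs c) x
  have hpdK : ∀ c, pd b (fun y => K y c) x = f x b * K x c - ∑ e, G.Γ c b e x * K x e := by
    intro c
    have h := hray x b c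
    unfold MetricG.covVec at h
    linarith
  unfold Lv
  rw [pd_sum (fun c _ => ((g_smooth G a c).dAt x).fun_mul (hdK c))]
  have step : ∀ c, pd b (fun y => G.g y a c * K y c) x
      = pd b (fun y => G.g y a c) x * K x c
        + G.g x a c * (f x b * K x c - ∑ e, G.Γ c b e x * K x e) := by
    intro c
    rw [pd_mul ((g_smooth G a c).dAt x) (hdK c), hpdK c]
  rw [Finset.sum_congr rfl fun c _ => step c]
  have expand : ∀ c, pd b (fun y => G.g y a c) x * K x c
      = (∑ e, G.g x a e * G.Γ e b c x) * K x c + (∑ e, G.g x c e * G.Γ e b a x) * K x c := by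
    intro c
    rw [compat G x b a c, add_mul]
  rw [Finset.sum_congr rfl fun c _ => by rw [expand c]]
  have cancel : ∑ c, ((∑ e, G.g x a e * G.Γ e b c x) * K x c
        + (∑ e, G.g x c e * G.Γ e b a x) * K x c
        + G.g x a c * (f x b * K x c - ∑ e, G.Γ c b e x * K x e))
      = (∑ c, (∑ e, G.g x c e * G.Γ e b a x) * K x c) + ∑ c, G.g x a c * (f x b * K x c) := by
    have hc1 : ∑ c, (∑ e, G.g x a e * G.Γ e b c x) * K x c
        = ∑ c, G.g x a c * (∑ e, G.Γ c b e x * K x e) := by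
      calc ∑ c, (∑ e, G.g x a e * G.Γ e b c x) * K x c
          = ∑ c, ∑ e, G.g x a e * G.Γ e b c x * K x c := by
            apply Finset.sum_congr rfl; intro c _; rw [Finset.sum_mul]
        _ = ∑ e, ∑ c, G.g x a e * G.Γ e b c x * K x c := Finset.sum_comm
        _ = ∑ c, G.g x a c * (∑ e, G.Γ c b e x * K x e) := by
            apply Finset.sum_congr rfl; intro c _
            rw [Finset.mul_sum]
            apply Finset.sum_congr rfl; intro e _; ring
    rw [Finset.sum_add_distrib, Finset.sum_add_distrib, hc1]
    have : ∀ c, G.g x a c * (f x b * K x c - ∑ e, G.Γ c b e x * K x e)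
        = G.g x a c * (f x b * K x c) - G.g x a c * (∑ e, G.Γ c b e x * K x e) := fun c => by ring
    rw [Finset.sum_congr rfl fun c _ => this c, Finset.sum_sub_distrib]
    ring
  rw [cancel]
  have p1 : ∑ c, G.g x a c * (f x b * K x c) = f x b * ∑ c, G.g x a c * K x c := by
    rw [Finset.mul_sum]; apply Finset.sum_congr rfl; intro c _; ring
  have p2 : ∑ c, (∑ e, G.g x c e * G.Γ e b a x) * K x c
      = ∑ e, G.Γ e b a x * ∑ c, G.g x e c * K x c := by
    calc ∑ c, (∑ e, G.g x c e * G.Γ e b a x) * K x c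
        = ∑ c, ∑ e, G.g x c e * G.Γ e b a x * K x c := by
          apply Finset.sum_congr rfl; intro c _; rw [Finset.sum_mul]
      _ = ∑ e, ∑ c, G.g x c e * G.Γ e b a x * K x c := Finset.sum_comm
      _ = ∑ e, G.Γ e b a x * ∑ c, G.g x e c * K x c := by
          apply Finset.sum_congr rfl; intro e _
          rw [Finset.mul_sum]
          apply Finset.sum_congr rfl; intro c _
          rw [G.symm x e c]; ring
  rw [p1, p2]
  ring

end KField
end Stmt7Aux

namespace Stmt7Aux
section Final
variable {n : ℕ} (G : MetricG n) (K : Pt n → Pt n) (f : Pt n → Fin n → ℝ)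

/-- the scalar profile of the Schouten tensor -/
def wfun (i : Fin n) : Pt n → ℝ :=
  fun y => (1/((n:ℝ)-2)) * (G.Ricci i i y / (Lv G K y i)^2)

lemma schouten_eq' (hpr : G.PureRadiation K) (hnull : G.IsNull K) (hK0 : ∀ x, K x ≠ 0)
    (y : Pt n) (i : Fin n) (hi : Lv G K y i ≠ 0) (a b : Fin n) :
    G.Schouten a b y = wfun G K i y * Lv G K y a * Lv G K y b :=
  schouten_eq G K hpr hnull hK0 y i hi a b

lemma wfun_diff (hKs : SmoothVF K) (i : Fin n) (x : Pt n) (hi : Lv G K x i ≠ 0) :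
    DifferentiableAt ℝ (wfun G K i) x := by
  unfold wfun
  have h3 : ContDiffAt ℝ (⊤ : ℕ∞) (fun y => G.Ricci i i y / (Lv G K y i)^2) x :=
    ((ricci_smooth G i i).contDiffAt).div (((Lv_smooth G K hKs i).pow 2).contDiffAt)
      (pow_ne_zero 2 hi)
  exact (h3.differentiableAt (by simp)).const_mul _

lemma cov2_contract (hKs : SmoothVF K) (hK0 : ∀ x, K x ≠ 0) (hnull : G.IsNull K)
    (hpr : G.PureRadiation K) (hray : G.ParallelRays K f)
    (x : Pt n) (X : Pt n) (hX : G.ip x (K x) X = 0) (b c : Fin n) :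
    (∑ a, G.cov2 (fun y i j => G.Schouten i j y) b c a x * X a) = 0 := by
  obtain ⟨i, hi⟩ := Lv_ne G K hK0 x
  have hx0 : (∑ a, Lv G K x a * X a) = 0 := by rw [← ip_eq G K x X]; exact hX
  have hLd : ∀ (y : Pt n) (a : Fin n), DifferentiableAt ℝ (fun z => Lv G K z a) y :=
    fun y a => Sm.dAt (Lv_smooth G K hKs a) y
  have hwd : DifferentiableAt ℝ (wfun G K i) x := wfun_diff G K hKs i x hi
  have hhd : DifferentiableAt ℝ (fun y => ∑ a, Lv G K y a * X a) x :=
    DifferentiableAt.fun_sum fun a _ => (hLd x a).mul_const (X a)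
  have hU : ∀ᶠ y in nhds x, Lv G K y i ≠ 0 :=
    ((Lv_smooth G K hKs i).continuous).continuousAt.eventually_ne hi
  have hsch_x : ∀ p q, G.Schouten p q x = wfun G K i x * Lv G K x p * Lv G K x q :=
    fun p q => schouten_eq' G K hpr hnull hK0 x i hi p q
  have hSX : (fun y => ∑ a, G.Schouten c a y * X a)
      =ᶠ[nhds x] fun y => (wfun G K i y * Lv G K y c) * ∑ a, Lv G K y a * X a := by
    filter_upwards [hU] with y hy
    rw [Finset.mul_sum]
    apply Finset.sum_congr rfl; intro a _
    rw [schouten_eq' G K hpr hnull hK0 y i hy c a]; ring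
  have hpdh : pd b (fun y => ∑ a, Lv G K y a * X a) x
      = ∑ a, (∑ e, G.Γ e b a x * Lv G K x e) * X a := by
    rw [pd_sum (fun a _ => (hLd x a).mul_const (X a))]
    have e1 : ∀ a, pd b (fun y => Lv G K y a * X a) x
        = pd b (fun y => Lv G K y a) x * X a := by
      intro a
      rw [pd_mul (hLd x a) (differentiableAt_const (X a)), pd_const]
      ring
    rw [Finset.sum_congr rfl fun a _ => e1 a]
    rw [Finset.sum_congr rfl fun a _ => by rw [pd_Lv G K f hKs hray x b a]]
    have e2 : ∀ a, (f x b * Lv G K x a + ∑ e, G.Γ e b a x * Lv G K x e) * X a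
        = f x b * (Lv G K x a * X a) + (∑ e, G.Γ e b a x * Lv G K x e) * X a := fun a => by ring
    rw [Finset.sum_congr rfl fun a _ => e2 a, Finset.sum_add_distrib, ← Finset.mul_sum,
      hx0, mul_zero, zero_add]
  have hA : ∑ a, pd b (fun y => G.Schouten c a y) x * X a
      = (wfun G K i x * Lv G K x c) * ∑ a, (∑ e, G.Γ e b a x * Lv G K x e) * X a := by
    have s1 : ∀ a, pd b (fun y => G.Schouten c a y) x * X a
        = pd b (fun y => G.Schouten c a y * X a) x := by
      intro a
      rw [pd_mul (Sm.dAt (schouten_smooth G c a) x) (differentiableAt_const (X a)), pd_const]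
      ring
    rw [Finset.sum_congr rfl fun a _ => s1 a]
    rw [← pd_sum (fun a _ => (Sm.dAt (schouten_smooth G c a) x).mul_const (X a))]
    rw [pd_congr hSX]
    rw [pd_mul (hwd.fun_mul (hLd x c)) hhd, hx0, mul_zero, zero_add, hpdh]
  have hB : ∑ a, (∑ e, G.Γ e b c x * G.Schouten e a x) * X a = 0 := by
    have e1 : ∀ a, (∑ e, G.Γ e b c x * G.Schouten e a x) * X a
        = (∑ e, G.Γ e b c x * (wfun G K i x * Lv G K x e)) * (Lv G K x a * X a) := by
      intro a
      rw [Finset.sum_mul, Finset.sum_mul]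
      apply Finset.sum_congr rfl; intro e _
      rw [hsch_x e a]; ring
    rw [Finset.sum_congr rfl fun a _ => e1 a, ← Finset.mul_sum, hx0, mul_zero]
  have hC : ∑ a, (∑ e, G.Γ e b a x * G.Schouten c e x) * X a
      = (wfun G K i x * Lv G K x c) * ∑ a, (∑ e, G.Γ e b a x * Lv G K x e) * X a := by
    rw [Finset.mul_sum]
    apply Finset.sum_congr rfl; intro a _
    have e1 : (∑ e, G.Γ e b a x * G.Schouten c e x)
        = (wfun G K i x * Lv G K x c) * ∑ e, G.Γ e b a x * Lv G K x e := by
      rw [Finset.mul_sum]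
      apply Finset.sum_congr rfl; intro e _
      rw [hsch_x c e]; ring
    rw [e1]; ring
  unfold MetricG.cov2
  have expand : ∀ a, (pd b (fun y => G.Schouten c a y) x
        - ∑ e, G.Γ e b c x * G.Schouten e a x - ∑ e, G.Γ e b a x * G.Schouten c e x) * X a
      = pd b (fun y => G.Schouten c a y) x * X a
        - (∑ e, G.Γ e b c x * G.Schouten e a x) * X a
        - (∑ e, G.Γ e b a x * G.Schouten c e x) * X a := fun a => by ring
  rw [Finset.sum_congr rfl fun a _ => expand a, Finset.sum_sub_distrib, Finset.sum_sub_distrib,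
    hA, hB, hC]
  ring

end Final
end Stmt7Aux

/-- Cotton condition for aligned pure radiation: If g is a pure radiation
metric with parallel rays spanned by K, then the Cotton tensor A_{abc} = 2∇_{[b}P_{c]a}
satisfies A_{abc} X^a = 0 for every X orthogonal to K. -/
theorem stmt_7 {n : ℕ} (hn : 3 ≤ n) (G : MetricG n) (K : Pt n → Pt n) (f : Pt n → Fin n → ℝ)
    (hKs : SmoothVF K) (hfs : SmoothForm f) (hK0 : ∀ x, K x ≠ 0) (hnull : G.IsNull K)
    (hpr : G.PureRadiation K) (hray : G.ParallelRays K f) :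
    ∀ x (X : Pt n), G.ip x (K x) X = 0 → ∀ b c,
      (∑ a, G.Cotton a b c x * X a) = 0 := by
  intro x X hX b c
  have key := Stmt7Aux.cov2_contract G K f hKs hK0 hnull hpr hray x X hX
  have e : ∀ a, G.Cotton a b c x * X a
      = G.cov2 (fun y i j => G.Schouten i j y) b c a x * X a
        - G.cov2 (fun y i j => G.Schouten i j y) c b a x * X a := by
    intro a
    unfold MetricG.Cotton
    ring
  rw [Finset.sum_congr rfl fun a _ => e a, Finset.sum_sub_distrib, key b c, key c b, sub_zero]
end
end
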